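/- Let N be a Poisson random measure on a standard Borel space X with σ-finite intensity measure ν, let h : X → [0,∞) be measurable, and set T := ∫_X h dN. Assume P(T = 0) = 0 and let θ > 0. Then for every measurable f : X → [0,∞]: E[ exp(−∫_X f dN) · T^{−θ} ] = (1/Γ(θ)) ∫_0^∞ v^{θ−1} exp(−∫_X (1 − e^{−f(x) − v·h(x)}) ν(dx)) dv, as an identity of values in [0,∞] (with the convention T^{−θ} := 0 when T = ∞). -/

import Mathlib

open MeasureTheory ProbabilityTheory ENNReal Filter Topology

/-- `expNeg x = e^{-x}` for `x ∈ [0,∞]`, with `e^{-∞} = 0`. -/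
noncomputable def expNeg (x : ℝ≥0∞) : ℝ≥0∞ :=
  if x = ∞ then 0 else ENNReal.ofReal (Real.exp (-x.toReal))

/-- `N` is a Poisson random measure on `X` with intensity `ν`, on the probability space `(Ω, P)`. -/
def IsPoissonRM {X Ω : Type*} [MeasurableSpace X] [MeasurableSpace Ω]
    (P : Measure Ω) (ν : Measure X) (N : Ω → Measure X) : Prop :=
  Measurable N ∧
  (∀ A : Set X, MeasurableSet A → ν A < ∞ → ∀ k : ℕ,
      P {ω | N ω A = k} =
        ENNReal.ofReal (Real.exp (-(ν A).toReal)) * (ν A) ^ k / (Nat.factorial k)) ∧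
  ∀ (m : ℕ) (A : Fin m → Set X), (∀ i, MeasurableSet (A i)) →
      (Pairwise fun i j => Disjoint (A i) (A j)) →
      iIndepFun (fun i ω => N ω (A i)) P

lemma expNeg_top : expNeg ∞ = 0 := by simp [expNeg]

lemma expNeg_of_ne_top {x : ℝ≥0∞} (hx : x ≠ ∞) :
    expNeg x = ENNReal.ofReal (Real.exp (-x.toReal)) := by simp [expNeg, hx]

lemma expNeg_zero : expNeg 0 = 1 := by simp [expNeg]

lemma expNeg_ne_top (x : ℝ≥0∞) : expNeg x ≠ ∞ := by
  unfold expNeg; split <;> simp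

lemma expNeg_le_one (x : ℝ≥0∞) : expNeg x ≤ 1 := by
  unfold expNeg; split
  · simp
  · rw [← ENNReal.ofReal_one]
    exact ENNReal.ofReal_le_ofReal (by
      rw [Real.exp_le_one_iff]
      simp [ENNReal.toReal_nonneg])

lemma expNeg_add (a b : ℝ≥0∞) : expNeg (a + b) = expNeg a * expNeg b := by
  rcases eq_or_ne a ∞ with ha | ha
  · simp [ha, expNeg_top, top_add]
  rcases eq_or_ne b ∞ with hb | hb
  · simp [hb, expNeg_top, add_top]
  rw [expNeg_of_ne_top ha, expNeg_of_ne_top hb, expNeg_of_ne_top (by finiteness),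
    ENNReal.toReal_add ha hb, neg_add, Real.exp_add, ENNReal.ofReal_mul (Real.exp_nonneg _)]

lemma measurable_expNeg : Measurable expNeg := by
  unfold expNeg
  exact Measurable.ite (measurableSet_singleton _) measurable_const
    (ENNReal.measurable_ofReal.comp ((Real.continuous_exp.measurable).comp
      ENNReal.measurable_toReal.neg))

lemma expNeg_anti {a b : ℝ≥0∞} (hab : a ≤ b) : expNeg b ≤ expNeg a := by
  rcases eq_or_ne b ∞ with hb | hb
  · simp [hb, expNeg_top]
  have ha : a ≠ ∞ := (lt_of_le_of_lt hab (lt_top_iff_ne_top.2 hb)).ne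
  rw [expNeg_of_ne_top ha, expNeg_of_ne_top hb]
  exact ENNReal.ofReal_le_ofReal (Real.exp_le_exp.2 (by
    simp only [neg_le_neg_iff]
    exact ENNReal.toReal_mono hb hab))

lemma expNeg_sum {ι : Type*} (s : Finset ι) (b : ι → ℝ≥0∞) :
    expNeg (∑ i ∈ s, b i) = ∏ i ∈ s, expNeg (b i) := by
  classical
  induction s using Finset.induction_on with
  | empty => simp [expNeg_zero]
  | insert i s h ih => simp [Finset.sum_insert h, Finset.prod_insert h, expNeg_add, ih]

lemma tendsto_expNeg_of_monotone {b : ℕ → ℝ≥0∞} (hb : Monotone b) {c : ℝ≥0∞}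
    (h : Tendsto b atTop (𝓝 c)) :
    Tendsto (fun n => expNeg (b n)) atTop (𝓝 (expNeg c)) := by
  rcases eq_or_ne c ∞ with hc | hc
  · subst hc
    rw [expNeg_top, ENNReal.tendsto_atTop_zero]
    intro ε hε
    rcases eq_or_ne ε ∞ with hε' | hε'
    · exact ⟨0, fun n _ => by simp [hε']⟩
    have hεr : 0 < ε.toReal := ENNReal.toReal_pos hε.ne' hε'
    obtain ⟨m, hm⟩ : ∃ m : ℕ, Real.exp (-(m : ℝ)) ≤ ε.toReal := by
      obtain ⟨m, hm⟩ := exists_nat_gt (Real.exp (-(Real.log ε.toReal)) / ε.toReal * 1)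
      -- simpler: choose m with exp(-m) ≤ ε via tendsto
      have : Tendsto (fun m : ℕ => Real.exp (-(m : ℝ))) atTop (𝓝 0) := by
        have := Real.tendsto_exp_atBot.comp
          (tendsto_neg_atBot_iff.mpr (tendsto_natCast_atTop_atTop (R := ℝ)))
        exact this
      rcases (this.eventually (eventually_le_nhds hεr)).exists with ⟨m, hm'⟩
      exact ⟨m, hm'⟩
    have hbm := (ENNReal.tendsto_nhds_top_iff_nat.1 h) m
    rw [eventually_atTop] at hbm
    obtain ⟨N, hN⟩ := hbm
    refine ⟨N, fun n hn => ?_⟩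
    calc expNeg (b n) ≤ expNeg (m : ℝ≥0∞) := expNeg_anti (le_of_lt (hN n hn))
      _ ≤ ε := by
          rw [expNeg_of_ne_top (by simp)]
          rw [← ENNReal.ofReal_toReal hε']
          exact ENNReal.ofReal_le_ofReal (by simpa using hm)
  · have hbn : ∀ n, b n ≠ ∞ := by
      intro n
      exact (lt_of_le_of_lt (hb.ge_of_tendsto h n) (lt_top_iff_ne_top.2 hc)).ne
    have h1 : Tendsto (fun n => (b n).toReal) atTop (𝓝 c.toReal) :=
      (ENNReal.tendsto_toReal hc).comp h
    have h2 : Tendsto (fun n => ENNReal.ofReal (Real.exp (-(b n).toReal))) atTop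
        (𝓝 (ENNReal.ofReal (Real.exp (-c.toReal)))) := by
      exact (ENNReal.continuous_ofReal.tendsto _).comp
        ((Real.continuous_exp.tendsto _).comp h1.neg)
    rw [expNeg_of_ne_top hc]
    refine h2.congr fun n => (expNeg_of_ne_top (hbn n)).symm

lemma real_exp_tsum (x : ℝ) : ∑' n : ℕ, x ^ n / (Nat.factorial n) = Real.exp x := by
  rw [Real.exp_eq_exp_ℝ]
  exact (NormedSpace.expSeries_div_hasSum_exp x).tsum_eq

lemma pois_series {t q : ℝ} (ht : 0 ≤ t) (hq : 0 ≤ q) :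
    ∑' k : ℕ, ENNReal.ofReal (q ^ k) *
      (ENNReal.ofReal (Real.exp (-t)) * ENNReal.ofReal t ^ k / (Nat.factorial k : ℝ≥0∞)) =
    ENNReal.ofReal (Real.exp (q * t - t)) := by
  have hterm : ∀ k : ℕ, ENNReal.ofReal (q ^ k) *
      (ENNReal.ofReal (Real.exp (-t)) * ENNReal.ofReal t ^ k / (Nat.factorial k : ℝ≥0∞)) =
      ENNReal.ofReal (Real.exp (-t) * ((q * t) ^ k / (Nat.factorial k))) := by
    intro k
    rw [← ENNReal.ofReal_pow ht, ← ENNReal.ofReal_mul (Real.exp_nonneg _),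
      ← ENNReal.ofReal_natCast, ← ENNReal.ofReal_div_of_pos (by positivity),
      ← ENNReal.ofReal_mul (by positivity)]
    congr 1
    rw [mul_pow]
    ring
  simp_rw [hterm]
  have hsumm : Summable (fun k : ℕ => Real.exp (-t) * ((q * t) ^ k / (Nat.factorial k))) :=
    (Real.summable_pow_div_factorial (q * t)).mul_left _
  rw [← ENNReal.ofReal_tsum_of_nonneg (fun k => by positivity) hsumm]
  congr 1
  rw [tsum_mul_left, real_exp_tsum, ← Real.exp_add]
  ring_nf

lemma lintegral_expNeg_mul_poisson {Ω : Type*} [MeasurableSpace Ω]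
    (P : Measure Ω) [IsProbabilityMeasure P] (Y : Ω → ℝ≥0∞) (hY : Measurable Y)
    (μA : ℝ≥0∞) (hμA : μA ≠ ∞)
    (hpmf : ∀ k : ℕ, P {ω | Y ω = k} =
      ENNReal.ofReal (Real.exp (-μA.toReal)) * μA ^ k / (Nat.factorial k : ℝ≥0∞))
    (c : ℝ≥0∞) :
    ∫⁻ ω, expNeg (c * Y ω) ∂P = expNeg ((1 - expNeg c) * μA) := by
  obtain ⟨t, ht, rfl⟩ : ∃ t : ℝ, 0 ≤ t ∧ μA = ENNReal.ofReal t :=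
    ⟨μA.toReal, ENNReal.toReal_nonneg, (ENNReal.ofReal_toReal hμA).symm⟩
  set E : ℕ → Set Ω := fun k => Y ⁻¹' {(k : ℝ≥0∞)} with hE
  have hEmeas : ∀ k, MeasurableSet (E k) := fun k => hY (measurableSet_singleton _)
  have hEdisj : Pairwise (Function.onFun Disjoint E) := by
    intro i j hij
    refine Set.disjoint_left.2 fun ω hi hj => ?_
    apply hij
    exact_mod_cast (Set.mem_preimage.1 hi).symm.trans (Set.mem_preimage.1 hj)
  have hpmf' : ∀ k, P (E k) =
      ENNReal.ofReal (Real.exp (-t)) * ENNReal.ofReal t ^ k / (Nat.factorial k : ℝ≥0∞) := by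
    intro k
    have := hpmf k
    rwa [ENNReal.toReal_ofReal ht] at this
  have hPU : P (⋃ k, E k) = 1 := by
    rw [measure_iUnion hEdisj hEmeas]
    have := pois_series ht (zero_le_one (α := ℝ))
    simp only [one_pow, ENNReal.ofReal_one, one_mul, one_mul] at this
    simp_rw [hpmf']
    rw [this]
    simp
  have hPUc : P (⋃ k, E k)ᶜ = 0 := by
    rw [measure_compl (MeasurableSet.iUnion hEmeas) (measure_ne_top _ _), hPU]
    simp
  have hsplit : ∫⁻ ω, expNeg (c * Y ω) ∂P = ∑' k : ℕ, expNeg (c * (k : ℝ≥0∞)) * P (E k) := by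
    rw [← lintegral_add_compl (fun ω => expNeg (c * Y ω)) (MeasurableSet.iUnion hEmeas)]
    have h2 : ∫⁻ ω in (⋃ k, E k)ᶜ, expNeg (c * Y ω) ∂P = 0 := by
      apply le_antisymm _ zero_le
      calc ∫⁻ ω in (⋃ k, E k)ᶜ, expNeg (c * Y ω) ∂P
          ≤ ∫⁻ _ in (⋃ k, E k)ᶜ, 1 ∂P := lintegral_mono fun ω => expNeg_le_one _
        _ = P (⋃ k, E k)ᶜ := by rw [setLIntegral_const, one_mul]
        _ = 0 := hPUc
    rw [h2, add_zero, lintegral_iUnion hEmeas hEdisj]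
    congr 1
    ext k
    have : ∀ ω ∈ E k, expNeg (c * Y ω) = expNeg (c * k) := by
      intro ω hω
      rw [Set.mem_preimage, Set.mem_singleton_iff] at hω
      rw [hω]
    rw [setLIntegral_congr_fun (hEmeas k) this,
      setLIntegral_const]
  rw [hsplit]
  rcases eq_or_ne c ∞ with hc | hc
  · subst hc
    rw [tsum_eq_single 0 ?_]
    · rw [Nat.cast_zero, mul_zero, expNeg_zero, one_mul, hpmf' 0]
      simp [expNeg_top, expNeg_of_ne_top hμA, ENNReal.toReal_ofReal ht]
    · intro k hk
      rw [ENNReal.top_mul (by exact_mod_cast hk), expNeg_top, zero_mul]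
  · set q := Real.exp (-c.toReal) with hqdef
    have hq0 : 0 ≤ q := Real.exp_nonneg _
    have hq1 : q ≤ 1 := Real.exp_le_one_iff.2 (neg_nonpos.2 ENNReal.toReal_nonneg)
    have hck : ∀ k : ℕ, expNeg (c * k) = ENNReal.ofReal (q ^ k) := by
      intro k
      rw [expNeg_of_ne_top (ENNReal.mul_ne_top hc (by simp)), ENNReal.toReal_mul,
        hqdef]
      rw [show ((k : ℝ≥0∞)).toReal = (k : ℝ) by simp, ← Real.exp_nat_mul]
      congr 1
      ring
    simp_rw [hck, hpmf']
    rw [pois_series ht hq0]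
    have h1q : (1 : ℝ≥0∞) - expNeg c = ENNReal.ofReal (1 - q) := by
      rw [expNeg_of_ne_top hc, ← hqdef, ENNReal.ofReal_sub _ hq0, ENNReal.ofReal_one]
    rw [h1q, ← ENNReal.ofReal_mul (by linarith),
      expNeg_of_ne_top ENNReal.ofReal_ne_top, ENNReal.toReal_ofReal (mul_nonneg (by linarith) ht)]
    congr 1
    ring

lemma lintegral_prod_of_iIndepFun {Ω ι : Type*} [MeasurableSpace Ω]
    (P : Measure Ω) [IsProbabilityMeasure P] (Y : ι → Ω → ℝ≥0∞)
    (hY : ∀ i, Measurable (Y i))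
    (hind : iIndepFun Y P) (s : Finset ι) :
    ∫⁻ ω, ∏ i ∈ s, Y i ω ∂P = ∏ i ∈ s, ∫⁻ ω, Y i ω ∂P := by
  classical
  induction s using Finset.induction_on with
  | empty => simp
  | @insert i s hi ih =>
    rw [Finset.prod_insert hi]
    have hindep : IndepFun (∏ j ∈ s, Y j) (Y i) P :=
      hind.indepFun_finsetProd_of_notMem hY hi
    have hindep' : IndepFun (fun ω => ∏ j ∈ s, Y j ω) (Y i) P := by
      have : (fun ω => ∏ j ∈ s, Y j ω) = ∏ j ∈ s, Y j := by
        ext ω; simp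
      rw [this]; exact hindep
    have key := lintegral_mul_eq_lintegral_mul_lintegral_of_indepFun
      (s.measurable_prod fun j _ => hY j) (hY i) hindep'
    have heq : ∫⁻ ω, ∏ j ∈ insert i s, Y j ω ∂P
        = ∫⁻ ω, ((fun ω => ∏ j ∈ s, Y j ω) * Y i) ω ∂P := by
      congr 1; ext ω; simp [Finset.prod_insert hi, mul_comm]
    rw [heq, key, ih, mul_comm]

section
variable {X Ω : Type*} [MeasurableSpace X] [MeasurableSpace Ω]
    (P : Measure Ω) [IsProbabilityMeasure P] (ν : Measure X)
    (N : Ω → Measure X) (hN : IsPoissonRM P ν N)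
include hN

lemma LF_sum (m : ℕ) (c : Fin m → ℝ≥0∞) (A : Fin m → Set X)
    (hA : ∀ i, MeasurableSet (A i)) (hd : Pairwise fun i j => Disjoint (A i) (A j))
    (hfin : ∀ i, ν (A i) ≠ ∞) :
    ∫⁻ ω, expNeg (∑ i, c i * N ω (A i)) ∂P = expNeg (∑ i, (1 - expNeg (c i)) * ν (A i)) := by
  have hbase := hN.2.2 m A hA hd
  have hcomp : iIndepFun
      (fun i ω => expNeg (c i * N ω (A i))) P := by
    have := hbase.comp (fun i t => expNeg (c i * t))
      (fun i => measurable_expNeg.comp (measurable_id.const_mul (c i)))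
    exact this
  have hYmeas : ∀ i, Measurable fun ω => expNeg (c i * N ω (A i)) := fun i =>
    measurable_expNeg.comp (((Measure.measurable_coe (hA i)).comp hN.1).const_mul (c i))
  calc ∫⁻ ω, expNeg (∑ i, c i * N ω (A i)) ∂P
      = ∫⁻ ω, ∏ i, expNeg (c i * N ω (A i)) ∂P := by
        congr 1; ext ω; exact expNeg_sum _ _
    _ = ∏ i, ∫⁻ ω, expNeg (c i * N ω (A i)) ∂P :=
        lintegral_prod_of_iIndepFun P _ hYmeas hcomp Finset.univ
    _ = ∏ i, expNeg ((1 - expNeg (c i)) * ν (A i)) := by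
        refine Finset.prod_congr rfl fun i _ => ?_
        exact lintegral_expNeg_mul_poisson P (fun ω => N ω (A i))
          ((Measure.measurable_coe (hA i)).comp hN.1) (ν (A i)) (hfin i)
          (fun k => hN.2.1 (A i) (hA i) (lt_top_iff_ne_top.2 (hfin i)) k) (c i)
    _ = expNeg (∑ i, (1 - expNeg (c i)) * ν (A i)) := (expNeg_sum _ _).symm

lemma LF_rep (m : ℕ) (c : Fin m → ℝ≥0∞) (A : Fin m → Set X)
    (hA : ∀ i, MeasurableSet (A i)) (hd : Pairwise fun i j => Disjoint (A i) (A j))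
    (hfin : ∀ i, ν (A i) ≠ ∞) :
    ∫⁻ ω, expNeg (∫⁻ x, (∑ i, (A i).indicator (fun _ => c i) x) ∂(N ω)) ∂P =
      expNeg (∫⁻ x, (1 - expNeg (∑ i, (A i).indicator (fun _ => c i) x)) ∂ν) := by
  have hlin : ∀ μ : Measure X,
      ∫⁻ x, (∑ i, (A i).indicator (fun _ => c i) x) ∂μ = ∑ i, c i * μ (A i) := by
    intro μ
    rw [lintegral_finset_sum _ (fun i _ => measurable_const.indicator (hA i))]
    exact Finset.sum_congr rfl fun i _ => lintegral_indicator_const (hA i) (c i)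
  have hpt : ∀ x, (1 : ℝ≥0∞) - expNeg (∑ i, (A i).indicator (fun _ => c i) x)
      = ∑ i, (A i).indicator (fun _ => 1 - expNeg (c i)) x := by
    intro x
    by_cases hx : ∃ i, x ∈ A i
    · obtain ⟨i, hi⟩ := hx
      have hsum : ∀ (b : Fin m → ℝ≥0∞),
          ∑ j, (A j).indicator (fun _ => b j) x = b i := by
        intro b
        rw [Finset.sum_eq_single_of_mem i (Finset.mem_univ i)]
        · simp [Set.indicator_of_mem hi]
        · intro j _ hji
          have : x ∉ A j := fun hxj =>
            Set.disjoint_left.1 (hd hji) hxj hi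
          simp [Set.indicator_of_notMem this]
      rw [hsum, hsum]
    · push_neg at hx
      have h1 : ∀ (b : Fin m → ℝ≥0∞), ∑ j, (A j).indicator (fun _ => b j) x = 0 := by
        intro b
        refine Finset.sum_eq_zero fun j _ => Set.indicator_of_notMem (hx j) _
      rw [h1, h1, expNeg_zero, tsub_self]
  calc ∫⁻ ω, expNeg (∫⁻ x, (∑ i, (A i).indicator (fun _ => c i) x) ∂(N ω)) ∂P
      = ∫⁻ ω, expNeg (∑ i, c i * N ω (A i)) ∂P := by
        congr 1; ext ω; rw [hlin]
    _ = expNeg (∑ i, (1 - expNeg (c i)) * ν (A i)) := LF_sum P ν N hN m c A hA hd hfin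
    _ = expNeg (∫⁻ x, (1 - expNeg (∑ i, (A i).indicator (fun _ => c i) x)) ∂ν) := by
        congr 1
        simp_rw [hpt]
        rw [lintegral_finset_sum _ (fun i _ => measurable_const.indicator (hA i))]
        exact (Finset.sum_congr rfl fun i _ =>
          lintegral_indicator_const (hA i) _).symm
end

section
variable {X Ω : Type*} [MeasurableSpace X] [MeasurableSpace Ω]
    (P : Measure Ω) [IsProbabilityMeasure P] (ν : Measure X)
    (N : Ω → Measure X) (hN : IsPoissonRM P ν N)

include hN

lemma stepLF (ψ : SimpleFunc X ℝ≥0∞) (S : Set X) (hS : MeasurableSet S)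
    (hfinS : ν S ≠ ∞) :
    ∫⁻ ω, expNeg (∫⁻ x, S.indicator (⇑ψ) x ∂(N ω)) ∂P =
      expNeg (∫⁻ x, (1 - expNeg (S.indicator (⇑ψ) x)) ∂ν) := by
  classical
  set m := ψ.range.card with hm
  set e : Fin m ≃ {a // a ∈ ψ.range} := ψ.range.equivFin.symm with he
  set c : Fin m → ℝ≥0∞ := fun i => (e i : ℝ≥0∞) with hc
  set A : Fin m → Set X := fun i => S ∩ ⇑ψ ⁻¹' {c i} with hA_def
  have hcinj : Function.Injective c := fun i j hij => e.injective (Subtype.ext hij)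
  have hA : ∀ i, MeasurableSet (A i) := fun i => hS.inter (ψ.measurableSet_fiber _)
  have hd : Pairwise fun i j => Disjoint (A i) (A j) := by
    intro i j hij
    refine Set.disjoint_left.2 fun x hxi hxj => hij (hcinj ?_)
    have h1 : ψ x = c i := hxi.2
    have h2 : ψ x = c j := hxj.2
    rw [← h1, h2]
  have hfin : ∀ i, ν (A i) ≠ ∞ := fun i =>
    (lt_of_le_of_lt (measure_mono Set.inter_subset_left)
      (lt_top_iff_ne_top.2 hfinS)).ne
  have hpt : ∀ x, S.indicator (⇑ψ) x = ∑ i, (A i).indicator (fun _ => c i) x := by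
    intro x
    have hre : ∑ i, (A i).indicator (fun _ => c i) x
        = ∑ a ∈ ψ.range, (S ∩ ⇑ψ ⁻¹' {a}).indicator (fun _ => a) x :=
      calc ∑ i, (A i).indicator (fun _ => c i) x
          = ∑ a : {a // a ∈ ψ.range},
              (S ∩ ⇑ψ ⁻¹' {(a : ℝ≥0∞)}).indicator (fun _ => (a : ℝ≥0∞)) x :=
            Equiv.sum_comp e (fun a : {a // a ∈ ψ.range} =>
              (S ∩ ⇑ψ ⁻¹' {(a : ℝ≥0∞)}).indicator (fun _ => (a : ℝ≥0∞)) x)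
        _ = ∑ a ∈ ψ.range, (S ∩ ⇑ψ ⁻¹' {a}).indicator (fun _ => a) x :=
            Finset.sum_coe_sort ψ.range
              (fun a : ℝ≥0∞ => (S ∩ ⇑ψ ⁻¹' {a}).indicator (fun _ => a) x)
    rw [hre]
    by_cases hxS : x ∈ S
    · rw [Set.indicator_of_mem hxS,
        Finset.sum_eq_single_of_mem (ψ x) (ψ.mem_range_self x)]
      · rw [Set.indicator_of_mem (Set.mem_inter hxS (Set.mem_singleton (ψ x)))]
      · intro a _ ha
        refine Set.indicator_of_notMem (fun hx => ha ?_) _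
        exact hx.2.symm
    · rw [Set.indicator_of_notMem hxS]
      refine (Finset.sum_eq_zero fun a _ =>
        Set.indicator_of_notMem (fun hx => hxS hx.1) _).symm
  have := LF_rep P ν N hN m c A hA hd hfin
  simp_rw [← hpt] at this
  exact this

variable [SigmaFinite ν]

lemma LF (g : X → ℝ≥0∞) (hg : Measurable g) :
    ∫⁻ ω, expNeg (∫⁻ x, g x ∂(N ω)) ∂P =
      expNeg (∫⁻ x, (1 - expNeg (g x)) ∂ν) := by
  set gn : ℕ → X → ℝ≥0∞ :=
    fun n => (spanningSets ν n).indicator (⇑(SimpleFunc.eapprox g n)) with hgn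
  have hgnm : ∀ n, Measurable (gn n) := fun n =>
    (SimpleFunc.measurable _).indicator (measurableSet_spanningSets ν n)
  have hmono : ∀ x, Monotone fun n => gn n x := by
    intro x a b hab
    by_cases hx : x ∈ spanningSets ν a
    · rw [hgn]
      simp only
      rw [Set.indicator_of_mem hx, Set.indicator_of_mem (monotone_spanningSets ν hab hx)]
      exact SimpleFunc.monotone_eapprox g hab x
    · rw [hgn]; simp only
      rw [Set.indicator_of_notMem hx]
      exact zero_le
  have hsup : ∀ x, (⨆ n, gn n x) = g x := by
    intro x
    apply le_antisymm
    · refine iSup_le fun n => le_trans (Set.indicator_le_self _ _ x) ?_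
      rw [← SimpleFunc.iSup_eapprox_apply hg]
      exact le_iSup (fun n => SimpleFunc.eapprox g n x) n
    · rw [← SimpleFunc.iSup_eapprox_apply hg]
      refine iSup_le fun k => ?_
      obtain ⟨j, hj⟩ : ∃ j, x ∈ spanningSets ν j := by
        have : x ∈ ⋃ j, spanningSets ν j := by
          rw [iUnion_spanningSets]; trivial
        exact Set.mem_iUnion.1 this
      refine le_trans ?_ (le_iSup (fun n => gn n x) (max k j))
      rw [hgn]; simp only
      rw [Set.indicator_of_mem (monotone_spanningSets ν (le_max_right k j) hj)]
      exact SimpleFunc.monotone_eapprox g (le_max_left k j) x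
  -- LHS convergence
  have hImono : ∀ ω, Monotone fun n => ∫⁻ x, gn n x ∂(N ω) :=
    fun ω a b hab => lintegral_mono fun x => hmono x hab
  have hIsup : ∀ ω, (⨆ n, ∫⁻ x, gn n x ∂(N ω)) = ∫⁻ x, g x ∂(N ω) := by
    intro ω
    rw [← lintegral_iSup hgnm (fun a b hab x => hmono x hab)]
    congr 1; ext x; rw [hsup]
  have hFlim : ∀ ω, Tendsto (fun n => expNeg (∫⁻ x, gn n x ∂(N ω))) atTop
      (𝓝 (expNeg (∫⁻ x, g x ∂(N ω)))) := by
    intro ω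
    refine tendsto_expNeg_of_monotone (hImono ω) ?_
    rw [← hIsup ω]
    exact tendsto_atTop_iSup (hImono ω)
  have hLHS : Tendsto (fun n => ∫⁻ ω, expNeg (∫⁻ x, gn n x ∂(N ω)) ∂P) atTop
      (𝓝 (∫⁻ ω, expNeg (∫⁻ x, g x ∂(N ω)) ∂P)) := by
    refine tendsto_lintegral_of_dominated_convergence (fun _ => 1)
      (fun n => measurable_expNeg.comp
        ((Measure.measurable_lintegral (hgnm n)).comp hN.1))
      (fun n => Filter.Eventually.of_forall fun ω => expNeg_le_one _)
      (by simp) (Filter.Eventually.of_forall hFlim)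
  -- RHS convergence
  have hrmono : Monotone fun n x => (1 : ℝ≥0∞) - expNeg (gn n x) := by
    intro a b hab x
    exact tsub_le_tsub_left (expNeg_anti (hmono x hab)) 1
  have hrlim : ∀ x, Tendsto (fun n => (1 : ℝ≥0∞) - expNeg (gn n x)) atTop
      (𝓝 ((1 : ℝ≥0∞) - expNeg (g x))) := by
    intro x
    have h1 : Tendsto (fun n => expNeg (gn n x)) atTop (𝓝 (expNeg (g x))) := by
      refine tendsto_expNeg_of_monotone (hmono x) ?_
      rw [← hsup x]
      exact tendsto_atTop_iSup (hmono x)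
    exact ((ENNReal.continuous_sub_left one_ne_top).tendsto _).comp h1
  have hrsup : ∀ x, (⨆ n, (1 : ℝ≥0∞) - expNeg (gn n x)) = 1 - expNeg (g x) := by
    intro x
    exact tendsto_nhds_unique
      (tendsto_atTop_iSup (fun a b hab => hrmono hab x)) (hrlim x)
  have hrint : (⨆ n, ∫⁻ x, (1 - expNeg (gn n x)) ∂ν) = ∫⁻ x, (1 - expNeg (g x)) ∂ν := by
    have hrmeas : ∀ n, Measurable fun x => (1 : ℝ≥0∞) - expNeg (gn n x) :=
      fun n => measurable_const.sub (measurable_expNeg.comp (hgnm n))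
    rw [← lintegral_iSup hrmeas (fun a b hab x => hrmono hab x)]
    congr 1; ext x; rw [hrsup]
  have hRHS : Tendsto (fun n => expNeg (∫⁻ x, (1 - expNeg (gn n x)) ∂ν)) atTop
      (𝓝 (expNeg (∫⁻ x, (1 - expNeg (g x)) ∂ν))) := by
    refine tendsto_expNeg_of_monotone
      (fun a b hab => lintegral_mono fun x => hrmono hab x) ?_
    rw [← hrint]
    exact tendsto_atTop_iSup (fun a b hab => lintegral_mono fun x => hrmono hab x)
  have heq : ∀ n, ∫⁻ ω, expNeg (∫⁻ x, gn n x ∂(N ω)) ∂P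
      = expNeg (∫⁻ x, (1 - expNeg (gn n x)) ∂ν) :=
    fun n => stepLF P ν N hN (SimpleFunc.eapprox g n) (spanningSets ν n)
      (measurableSet_spanningSets ν n) (measure_spanningSets_lt_top ν n).ne
  exact tendsto_nhds_unique ((tendsto_congr heq).1 hLHS) hRHS
end

lemma gamma_identity {θ : ℝ} (hθ : 0 < θ) {t : ℝ≥0∞} (ht : t ≠ 0) :
    t ^ (-θ) = (ENNReal.ofReal (Real.Gamma θ))⁻¹ *
      ∫⁻ v in Set.Ioi (0 : ℝ),
        ENNReal.ofReal (v ^ (θ - 1)) * expNeg (ENNReal.ofReal v * t) := by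
  have hΓpos : 0 < Real.Gamma θ := Real.Gamma_pos_of_pos hθ
  have hΓ0 : ENNReal.ofReal (Real.Gamma θ) ≠ 0 := by
    simp [ENNReal.ofReal_eq_zero, not_le, hΓpos]
  rcases eq_or_ne t ∞ with htop | htop
  · subst htop
    have hI : ∫⁻ v in Set.Ioi (0 : ℝ),
        ENNReal.ofReal (v ^ (θ - 1)) * expNeg (ENNReal.ofReal v * ∞) = 0 := by
      rw [← lintegral_zero (μ := volume.restrict (Set.Ioi (0:ℝ)))]
      apply setLIntegral_congr_fun measurableSet_Ioi
      refine fun v hv => ?_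
      beta_reduce
      rw [ENNReal.mul_top ((ENNReal.ofReal_pos.2 (Set.mem_Ioi.1 hv)).ne'),
        expNeg_top, mul_zero]
    rw [hI, mul_zero, ENNReal.top_rpow_of_neg (by linarith)]
  · set s := t.toReal with hs
    have hspos : 0 < s := ENNReal.toReal_pos ht htop
    have hts : t = ENNReal.ofReal s := (ENNReal.ofReal_toReal htop).symm
    have hI : ∫⁻ v in Set.Ioi (0 : ℝ),
        ENNReal.ofReal (v ^ (θ - 1)) * expNeg (ENNReal.ofReal v * t)
        = ENNReal.ofReal ((1 / s) ^ θ * Real.Gamma θ) := by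
      have hptw : ∀ v ∈ Set.Ioi (0 : ℝ),
          ENNReal.ofReal (v ^ (θ - 1)) * expNeg (ENNReal.ofReal v * t)
          = ENNReal.ofReal (v ^ (θ - 1) * Real.exp (-(s * v))) := by
        intro v hv
        have hv0 : 0 < v := Set.mem_Ioi.1 hv
        rw [hts, ← ENNReal.ofReal_mul hv0.le,
          expNeg_of_ne_top ENNReal.ofReal_ne_top,
          ENNReal.toReal_ofReal (by positivity),
          ← ENNReal.ofReal_mul (by positivity)]
        congr 2
        ring
      rw [setLIntegral_congr_fun measurableSet_Ioi hptw]
      have hint : IntegrableOn (fun v : ℝ => v ^ (θ - 1) * Real.exp (-(s * v)))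
          (Set.Ioi (0 : ℝ)) := by
        have := integrableOn_rpow_mul_exp_neg_mul_rpow
          (show (-1 : ℝ) < θ - 1 by linarith) one_pos hspos
        refine this.congr_fun (fun v hv => ?_) measurableSet_Ioi
        beta_reduce
        rw [Real.rpow_one]
        ring_nf
      rw [← ofReal_integral_eq_lintegral_ofReal hint
        ((ae_restrict_iff' measurableSet_Ioi).2 (Filter.Eventually.of_forall
          fun v hv => by
            have hv0 : 0 < v := Set.mem_Ioi.1 hv
            positivity))]
      congr 1
      exact Real.integral_rpow_mul_exp_neg_mul_Ioi hθ hspos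
    rw [hI, ENNReal.ofReal_mul (by positivity), ← mul_assoc,
      mul_comm ((ENNReal.ofReal (Real.Gamma θ))⁻¹), mul_assoc,
      ENNReal.inv_mul_cancel hΓ0 ENNReal.ofReal_ne_top, mul_one, hts,
      ENNReal.ofReal_rpow_of_pos hspos]
    congr 1
    rw [one_div, Real.inv_rpow hspos.le, Real.rpow_neg hspos.le]

/-- Theorem 5.1(i) in Laplace-functional form: for `T = ∫ h dN` with `N` Poisson of σ-finite
intensity `ν`, `P(T = 0) = 0` and `θ > 0`,
`E[e^{-N(f)} T^{-θ}] = (1/Γ(θ)) ∫₀^∞ v^{θ-1} exp(-∫(1-e^{-f(x)-v·h(x)})ν(dx)) dv`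
(in `[0,∞]`, with `∞^{-θ} = 0`). -/
theorem tilted_gamma_identity
    {X Ω : Type*} [MeasurableSpace X] [StandardBorelSpace X] [MeasurableSpace Ω]
    (P : Measure Ω) [IsProbabilityMeasure P]
    (ν : Measure X) [SigmaFinite ν]
    (h : X → NNReal) (hh : Measurable h)
    (N : Ω → Measure X) (hN : IsPoissonRM P ν N)
    (hT0 : P {ω | ∫⁻ x, (h x : ℝ≥0∞) ∂(N ω) = 0} = 0)
    (θ : ℝ) (hθ : 0 < θ)
    (f : X → ℝ≥0∞) (hf : Measurable f) :
    ∫⁻ ω, expNeg (∫⁻ x, f x ∂(N ω)) * (∫⁻ x, (h x : ℝ≥0∞) ∂(N ω)) ^ (-θ) ∂P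
      = (ENNReal.ofReal (Real.Gamma θ))⁻¹ *
          ∫⁻ v in Set.Ioi (0 : ℝ),
            ENNReal.ofReal (v ^ (θ - 1)) *
              expNeg (∫⁻ x, (1 - expNeg (f x + ENNReal.ofReal v * (h x : ℝ≥0∞))) ∂ν) := by
  have hhco : Measurable fun x => (h x : ℝ≥0∞) :=
    measurable_coe_nnreal_ennreal.comp hh
  set T : Ω → ℝ≥0∞ := fun ω => ∫⁻ x, (h x : ℝ≥0∞) ∂(N ω) with hT
  set Nf : Ω → ℝ≥0∞ := fun ω => ∫⁻ x, f x ∂(N ω) with hNf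
  have hTmeas : Measurable T := (Measure.measurable_lintegral hhco).comp hN.1
  have hNfmeas : Measurable Nf := (Measure.measurable_lintegral hf).comp hN.1
  set Γ : ℝ≥0∞ := ENNReal.ofReal (Real.Gamma θ) with hΓ
  have hΓ0 : Γ ≠ 0 := by
    simp [hΓ, ENNReal.ofReal_eq_zero, not_le, Real.Gamma_pos_of_pos hθ]
  have haeT : ∀ᵐ ω ∂P, T ω ≠ 0 := by
    rw [ae_iff]
    convert hT0 using 2
    ext ω
    simp [hT]
  set G : Ω → ℝ → ℝ≥0∞ := fun ω v =>
    ENNReal.ofReal (v ^ (θ - 1)) * expNeg (Nf ω + ENNReal.ofReal v * T ω) with hG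
  have hGmeas : Measurable (Function.uncurry G) := by
    apply Measurable.mul
    · exact ENNReal.measurable_ofReal.comp
        ((measurable_snd (α := Ω)).pow_const _)
    · exact measurable_expNeg.comp
        ((hNfmeas.comp measurable_fst).add
          ((ENNReal.measurable_ofReal.comp measurable_snd).mul
            (hTmeas.comp measurable_fst)))
  have step1 : ∫⁻ ω, expNeg (Nf ω) * T ω ^ (-θ) ∂P
      = ∫⁻ ω, Γ⁻¹ * (∫⁻ v in Set.Ioi (0 : ℝ), G ω v) ∂P := by
    refine lintegral_congr_ae (haeT.mono fun ω hω => ?_)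
    simp only
    rw [gamma_identity hθ hω, ← mul_assoc, mul_comm (expNeg (Nf ω)) Γ⁻¹, mul_assoc]
    congr 1
    rw [← lintegral_const_mul' _ _ (expNeg_ne_top (Nf ω))]
    refine lintegral_congr fun v => ?_
    rw [hG]
    simp only
    rw [expNeg_add, mul_comm (expNeg (Nf ω)), mul_assoc]
    ring
  have hkey : ∀ v : ℝ, ∫⁻ ω, G ω v ∂P
      = ENNReal.ofReal (v ^ (θ - 1)) *
        expNeg (∫⁻ x, (1 - expNeg (f x + ENNReal.ofReal v * (h x : ℝ≥0∞))) ∂ν) := by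
    intro v
    rw [hG]
    simp only
    rw [lintegral_const_mul' _ _ ENNReal.ofReal_ne_top]
    congr 1
    have harg : ∀ ω, Nf ω + ENNReal.ofReal v * T ω
        = ∫⁻ x, (f x + ENNReal.ofReal v * (h x : ℝ≥0∞)) ∂(N ω) := by
      intro ω
      rw [lintegral_add_left hf, lintegral_const_mul _ hhco]
    simp_rw [harg]
    exact LF P ν N hN _ (hf.add (hhco.const_mul _))
  calc ∫⁻ ω, expNeg (Nf ω) * T ω ^ (-θ) ∂P
      = ∫⁻ ω, Γ⁻¹ * (∫⁻ v in Set.Ioi (0 : ℝ), G ω v) ∂P := step1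
    _ = Γ⁻¹ * ∫⁻ ω, (∫⁻ v in Set.Ioi (0 : ℝ), G ω v) ∂P :=
        lintegral_const_mul' _ _ (ENNReal.inv_ne_top.2 hΓ0)
    _ = Γ⁻¹ * ∫⁻ v in Set.Ioi (0 : ℝ), (∫⁻ ω, G ω v ∂P) := by
        rw [lintegral_lintegral_swap hGmeas.aemeasurable]
    _ = Γ⁻¹ * ∫⁻ v in Set.Ioi (0 : ℝ),
          ENNReal.ofReal (v ^ (θ - 1)) *
            expNeg (∫⁻ x, (1 - expNeg (f x + ENNReal.ofReal v * (h x : ℝ≥0∞))) ∂ν) := by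
        congr 1
        exact lintegral_congr fun v => hkey v
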